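/- If g̃ in GA(Ṽ) fixes a point (g̃ is elliptic), then the reflection length of g̃ in GA(Ṽ) equals dim mov(g̃). -/

import Mathlib

open Module Pointwise

/-- The moved space of an affine transformation. -/
def mov {F V P : Type*} [Field F] [AddCommGroup V] [Module F V] [AddTorsor V P]
    (g : P ≃ᵃ[F] P) : Set V :=
  Set.range fun x => g x -ᵥ x

/-- A reflection in the general affine group: an invertible affine transformation
whose fixed-point set is an affine hyperplane. -/
def IsAffRefl {F V P : Type*} [Field F] [AddCommGroup V] [Module F V] [AddTorsor V P]
    (r : P ≃ᵃ[F] P) : Prop :=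
  ∃ H : AffineSubspace F P, (H : Set P) = {x | r x = x} ∧
    Module.finrank F (V ⧸ H.direction) = 1

/-- Reflection length in the general affine group (`⊤` if no factorization exists). -/
noncomputable def reflLenA {F V P : Type*} [Field F] [AddCommGroup V] [Module F V]
    [AddTorsor V P] (g : P ≃ᵃ[F] P) : ℕ∞ :=
  sInf {n : ℕ∞ | ∃ l : List (P ≃ᵃ[F] P),
    (∀ r ∈ l, IsAffRefl r) ∧ l.prod = g ∧ (l.length : ℕ∞) = n}

/-- The dimension of the moved space (an affine subspace of `V`). -/
noncomputable def movDim {F V P : Type*} [Field F] [AddCommGroup V] [Module F V]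
    [AddTorsor V P] (g : P ≃ᵃ[F] P) : ℕ :=
  Module.finrank F (vectorSpan F (mov g))

section Aux

variable {F V P : Type*} [Field F] [AddCommGroup V] [Module F V]

/-- A functional which is nonzero at two given nonzero vectors. -/
lemma exists_dual_ne_zero_pair [FiniteDimensional F V] {u v : V} (hu : u ≠ 0) (hv : v ≠ 0) :
    ∃ ψ : V →ₗ[F] F, ψ u ≠ 0 ∧ ψ v ≠ 0 := by
  obtain ⟨ψ₁, hψ₁⟩ : ∃ ψ : Module.Dual F V, ψ u ≠ 0 := by
    by_contra h; push_neg at h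
    exact hu ((forall_dual_apply_eq_zero_iff F u).mp h)
  obtain ⟨ψ₂, hψ₂⟩ : ∃ ψ : Module.Dual F V, ψ v ≠ 0 := by
    by_contra h; push_neg at h
    exact hv ((forall_dual_apply_eq_zero_iff F v).mp h)
  by_cases h1 : ψ₁ v ≠ 0
  · exact ⟨ψ₁, hψ₁, h1⟩
  by_cases h2 : ψ₂ u ≠ 0
  · exact ⟨ψ₂, h2, hψ₂⟩
  push_neg at h1 h2
  refine ⟨ψ₁ + ψ₂, ?_, ?_⟩ <;> simp [h1, h2, hψ₁, hψ₂]

lemma exists_dual_vanishing [FiniteDimensional F V] (K : Submodule F V) {u v : V}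
    (hu : u ∉ K) (hv : v ∉ K) :
    ∃ φ : V →ₗ[F] F, (∀ x ∈ K, φ x = 0) ∧ φ u = 1 ∧ φ v ≠ 0 := by
  have hu' : K.mkQ u ≠ 0 := by
    simpa [Submodule.mkQ_apply, Submodule.Quotient.mk_eq_zero] using hu
  have hv' : K.mkQ v ≠ 0 := by
    simpa [Submodule.mkQ_apply, Submodule.Quotient.mk_eq_zero] using hv
  obtain ⟨ψ, hψu, hψv⟩ := exists_dual_ne_zero_pair (F := F) hu' hv'
  refine ⟨(ψ (K.mkQ u))⁻¹ • (ψ.comp K.mkQ), ?_, ?_, ?_⟩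
  · intro x hx
    simp [(Submodule.Quotient.mk_eq_zero K).mpr hx]
  · simp only [LinearMap.smul_apply, LinearMap.coe_comp, Function.comp_apply,
      Submodule.mkQ_apply, smul_eq_mul]
    exact inv_mul_cancel₀ (by simpa using hψu)
  · simp only [LinearMap.smul_apply, LinearMap.coe_comp, Function.comp_apply,
      Submodule.mkQ_apply, smul_eq_mul]
    exact mul_ne_zero (inv_ne_zero (by simpa using hψu)) (by simpa using hψv)

/-- The linear "reflection" `x ↦ x - φ x • w`, invertible when `φ w ≠ 1`. -/
noncomputable def linRefl (φ : V →ₗ[F] F) (w : V) (hw : φ w ≠ 1) : V ≃ₗ[F] V :=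
  LinearEquiv.ofLinear (LinearMap.id - φ.smulRight w)
    (LinearMap.id + ((1 - φ w)⁻¹ • φ).smulRight w)
    (by
      ext x
      have hc : (1 : F) - φ w ≠ 0 := sub_ne_zero.mpr (Ne.symm hw)
      simp only [LinearMap.coe_comp, Function.comp_apply, LinearMap.add_apply,
        LinearMap.sub_apply, LinearMap.id_apply, LinearMap.smulRight_apply,
        LinearMap.smul_apply, smul_eq_mul, map_add, map_smul]
      match_scalars <;> field_simp <;> ring)
    (by
      ext x
      have hc : (1 : F) - φ w ≠ 0 := sub_ne_zero.mpr (Ne.symm hw)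
      simp only [LinearMap.coe_comp, Function.comp_apply, LinearMap.add_apply,
        LinearMap.sub_apply, LinearMap.id_apply, LinearMap.smulRight_apply,
        LinearMap.smul_apply, smul_eq_mul, map_sub, map_smul]
      match_scalars <;> field_simp <;> ring)

lemma linRefl_apply (φ : V →ₗ[F] F) (w : V) (hw : φ w ≠ 1) (x : V) :
    linRefl φ w hw x = x - φ x • w := rfl

lemma linRefl_coe (φ : V →ₗ[F] F) (w : V) (hw : φ w ≠ 1) :
    (linRefl φ w hw : V →ₗ[F] V) = LinearMap.id - φ.smulRight w := rfl

lemma linRefl_symm_coe (φ : V →ₗ[F] F) (w : V) (hw : φ w ≠ 1) :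
    ((linRefl φ w hw).symm : V →ₗ[F] V)
      = LinearMap.id + ((1 - φ w)⁻¹ • φ).smulRight w := rfl

lemma range_smulRight {φ : V →ₗ[F] F} {w : V} {x : V} (hx : φ x ≠ 0) :
    LinearMap.range (φ.smulRight w) = Submodule.span F {w} := by
  apply le_antisymm
  · rintro _ ⟨y, rfl⟩
    exact Submodule.smul_mem _ _ (Submodule.mem_span_singleton_self w)
  · rw [Submodule.span_singleton_le_iff_mem]
    exact ⟨(φ x)⁻¹ • x, by rw [LinearMap.smulRight_apply, map_smul, smul_eq_mul, inv_mul_cancel₀ hx, one_smul]⟩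

end Aux

section LinearUpper

variable {F V : Type*} [Field F] [AddCommGroup V] [Module F V] [FiniteDimensional F V]

/-- Scherk's theorem: a linear automorphism is a product of at most
`rank (f - 1)` hyperplane reflections. -/
lemma linear_upper (d : ℕ) :
    ∀ f : V ≃ₗ[F] V, finrank F (LinearMap.range ((f : V →ₗ[F] V) - 1)) ≤ d →
    ∃ l : List (V ≃ₗ[F] V),
      (∀ s ∈ l, finrank F (LinearMap.range ((s : V →ₗ[F] V) - 1)) = 1)
      ∧ l.prod = f ∧ l.length ≤ d := by
  induction d with
  | zero =>
    intro f hf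
    have h0 : LinearMap.range ((f : V →ₗ[F] V) - 1) = ⊥ :=
      Submodule.finrank_eq_zero.mp (Nat.le_zero.mp hf)
    have h1 : (f : V →ₗ[F] V) - 1 = 0 := LinearMap.range_eq_bot.mp h0
    refine ⟨[], by simp, ?_, by simp⟩
    ext x
    have := congrArg (fun m => (m : V →ₗ[F] V) x) h1
    simp only [LinearMap.sub_apply, LinearMap.zero_apply, Module.End.one_apply] at this
    exact (sub_eq_zero.mp this).symm
  | succ d ih =>
    intro f hf
    by_cases h1 : (f : V →ₗ[F] V) - 1 = 0
    · refine ⟨[], by simp, ?_, by simp⟩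
      ext x
      have := congrArg (fun m => (m : V →ₗ[F] V) x) h1
      simp only [LinearMap.sub_apply, LinearMap.zero_apply, Module.End.one_apply] at this
      exact (sub_eq_zero.mp this).symm
    · set K := LinearMap.ker ((f : V →ₗ[F] V) - 1) with hK
      have hKne : K ≠ ⊤ := fun h => h1 (LinearMap.ker_eq_top.mp h)
      obtain ⟨v, hv⟩ : ∃ v, v ∉ K := by
        by_contra h; push_neg at h
        exact hKne (Submodule.eq_top_iff'.mpr h)
      have hfv : f v ≠ v := by
        intro h; apply hv; simp [hK, LinearMap.mem_ker, h, sub_eq_zero]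
      have hu : f v ∉ K := by
        intro h
        apply hfv
        have : f (f v) = f v := by
          have := h
          simp only [hK, LinearMap.mem_ker, LinearMap.sub_apply, Module.End.one_apply,
            sub_eq_zero] at this
          simpa using this
        exact f.injective this
      obtain ⟨φ, hφK, hφu, hφv⟩ := exists_dual_vanishing K hu hv
      set w : V := f v - v with hwdef
      have hφw : φ w ≠ 1 := by
        rw [hwdef, map_sub, hφu]
        intro h
        exact hφv (sub_eq_self.mp h)
      set s : V ≃ₗ[F] V := linRefl φ w hφw with hs
      -- v is fixed by s * f, and K remains fixed
      have hsf_v : (s * f) v = v := by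
        show s (f v) = v
        rw [linRefl_apply, hφu, one_smul, hwdef]
        abel
      have hsf_K : ∀ x ∈ K, (s * f) x = x := by
        intro x hx
        have hfx : f x = x := by
          have := hx
          simp only [hK, LinearMap.mem_ker, LinearMap.sub_apply, Module.End.one_apply,
            sub_eq_zero] at this
          simpa using this
        show s (f x) = x
        rw [hfx, linRefl_apply, hφK x hx, zero_smul, sub_zero]
      -- the kernel grows strictly
      set K' := LinearMap.ker (((s * f : V ≃ₗ[F] V) : V →ₗ[F] V) - 1) with hK'
      have hKK' : K ≤ K' := by
        intro x hx
        simp only [hK', LinearMap.mem_ker, LinearMap.sub_apply, Module.End.one_apply,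
          sub_eq_zero]
        exact hsf_K x hx
      have hvK' : v ∈ K' := by
        simp only [hK', LinearMap.mem_ker, LinearMap.sub_apply, Module.End.one_apply,
          sub_eq_zero]
        exact hsf_v
      have hlt : K < K' := lt_of_le_of_ne hKK' (fun h => hv (h ▸ hvK'))
      have hrank : finrank F (LinearMap.range (((s * f : V ≃ₗ[F] V) : V →ₗ[F] V) - 1)) ≤ d := by
        have e1 := LinearMap.finrank_range_add_finrank_ker ((f : V →ₗ[F] V) - 1)
        have e2 := LinearMap.finrank_range_add_finrank_ker
          (((s * f : V ≃ₗ[F] V) : V →ₗ[F] V) - 1)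
        have e3 : finrank F K < finrank F K' := Submodule.finrank_lt_finrank_of_lt hlt
        rw [← hK] at e1
        rw [← hK'] at e2
        omega
      obtain ⟨l', hl'refl, hl'prod, hl'len⟩ := ih (s * f) hrank
      refine ⟨s⁻¹ :: l', ?_, ?_, ?_⟩
      · intro r hr
        rcases List.mem_cons.mp hr with h | h
        · subst h
          have : ((s⁻¹ : V ≃ₗ[F] V) : V →ₗ[F] V) - 1 = ((1 - φ w)⁻¹ • φ).smulRight w := by
            show ((s.symm : V ≃ₗ[F] V) : V →ₗ[F] V) - 1 = _
            rw [hs, linRefl_symm_coe]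
            ext x; simp
          rw [this, range_smulRight (x := v) (by simp [hφv, sub_ne_zero.mpr (Ne.symm hφw)])]
          exact finrank_span_singleton (by simpa [hwdef, sub_ne_zero] using hfv)
        · exact hl'refl r h
      · rw [List.prod_cons, hl'prod]
        group
      · simpa using Nat.succ_le_succ hl'len
  
end LinearUpper

section Affine

variable {F V P : Type*} [Field F] [AddCommGroup V] [Module F V] [AddTorsor V P]

/-- Conjugation of linear automorphisms into affine automorphisms fixing `a`. -/
def conjAff (a : P) : (V ≃ₗ[F] V) →* (P ≃ᵃ[F] P) where
  toFun s := AffineEquiv.mk' (fun x => s (x -ᵥ a) +ᵥ a) s a (fun p => by simp)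
  map_one' := by
    ext x
    show (1 : V ≃ₗ[F] V) (x -ᵥ a) +ᵥ a = x
    simp
  map_mul' s t := by
    ext x
    show (s * t) (x -ᵥ a) +ᵥ a = s ((t (x -ᵥ a) +ᵥ a) -ᵥ a) +ᵥ a
    rw [vadd_vsub]
    rfl

lemma conjAff_apply (a : P) (s : V ≃ₗ[F] V) (x : P) :
    conjAff a s x = s (x -ᵥ a) +ᵥ a := rfl

lemma conjAff_linear_eq (a : P) (g : P ≃ᵃ[F] P) (ha : g a = a) :
    conjAff a g.linear = g := by
  ext x
  show g.linear (x -ᵥ a) +ᵥ a = g x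
  conv_rhs => rw [← vsub_vadd x a, g.map_vadd, ha]

lemma isAffRefl_conjAff [FiniteDimensional F V] (a : P) (s : V ≃ₗ[F] V)
    (hs : Module.finrank F (LinearMap.range ((s : V →ₗ[F] V) - 1)) = 1) :
    IsAffRefl (conjAff a s) := by
  refine ⟨AffineSubspace.mk' a (LinearMap.ker ((s : V →ₗ[F] V) - 1)), ?_, ?_⟩
  · ext x
    simp only [AffineSubspace.mem_coe, AffineSubspace.mem_mk',
      LinearMap.mem_ker, LinearMap.sub_apply, Module.End.one_apply, LinearEquiv.coe_coe,
      Set.mem_setOf_eq, conjAff_apply, sub_eq_zero]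
    constructor
    · intro h
      rw [h, vsub_vadd]
    · intro h
      have := congrArg (fun y => y -ᵥ a) h
      simpa [vadd_vsub] using this
  · rw [AffineSubspace.direction_mk']
    have e1 := LinearMap.finrank_range_add_finrank_ker ((s : V →ₗ[F] V) - 1)
    have e2 := Submodule.finrank_quotient_add_finrank (LinearMap.ker ((s : V →ₗ[F] V) - 1))
    omega

lemma mov_eq_range (g : P ≃ᵃ[F] P) (a : P) (ha : g a = a) :
    mov g = (LinearMap.range ((g.linear : V →ₗ[F] V) - 1) : Submodule F V) := by
  ext w
  constructor
  · rintro ⟨x, rfl⟩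
    refine ⟨x -ᵥ a, ?_⟩
    simp only [LinearMap.sub_apply, Module.End.one_apply, LinearEquiv.coe_coe]
    have hgx : g x = g.linear (x -ᵥ a) +ᵥ a := by
      conv_lhs => rw [← vsub_vadd x a, g.map_vadd, ha]
    rw [hgx, vadd_vsub_assoc, sub_eq_add_neg, neg_vsub_eq_vsub_rev]
  · rintro ⟨v, rfl⟩
    refine ⟨v +ᵥ a, ?_⟩
    show g (v +ᵥ a) -ᵥ (v +ᵥ a) = _
    rw [g.map_vadd, ha, vadd_vsub_vadd_cancel_right]
    simp

lemma vectorSpan_coe_submodule (S : Submodule F V) : vectorSpan F (S : Set V) = S := by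
  apply le_antisymm
  · show Submodule.span F ((S : Set V) -ᵥ (S : Set V)) ≤ S
    apply Submodule.span_le.mpr
    rintro _ ⟨x, hx, y, hy, rfl⟩
    simpa [vsub_eq_sub] using S.sub_mem hx hy
  · intro x hx
    have hm : x ∈ (S : Set V) -ᵥ (S : Set V) :=
      ⟨x, hx, 0, S.zero_mem, by simp [vsub_eq_sub]⟩
    exact Submodule.subset_span hm

lemma rank_le_one_of_isAffRefl [FiniteDimensional F V] {r : P ≃ᵃ[F] P} (hr : IsAffRefl r) :
    Module.finrank F (LinearMap.range ((r.linear : V →ₗ[F] V) - 1)) ≤ 1 := by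
  obtain ⟨H, hset, hdim⟩ := hr
  have hdir : H.direction ≤ LinearMap.ker ((r.linear : V →ₗ[F] V) - 1) := by
    rcases (H : Set P).eq_empty_or_nonempty with he | hne
    · rw [(AffineSubspace.coe_eq_bot_iff H).mp he, AffineSubspace.direction_bot]
      exact bot_le
    · intro u hu
      obtain ⟨p1, hp1, p2, hp2, rfl⟩ := (AffineSubspace.mem_direction_iff_eq_vsub hne u).mp hu
      have h1 : r p1 = p1 := by
        have : p1 ∈ {x | r x = x} := hset ▸ hp1
        exact this
      have h2 : r p2 = p2 := by
        have : p2 ∈ {x | r x = x} := hset ▸ hp2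
        exact this
      simp only [LinearMap.mem_ker, LinearMap.sub_apply, Module.End.one_apply,
        LinearEquiv.coe_coe, sub_eq_zero]
      calc r.linear (p1 -ᵥ p2) = r p1 -ᵥ r p2 := r.toAffineMap.linearMap_vsub p1 p2
        _ = p1 -ᵥ p2 := by rw [h1, h2]
  have e1 := LinearMap.finrank_range_add_finrank_ker ((r.linear : V →ₗ[F] V) - 1)
  have e2 := Submodule.finrank_quotient_add_finrank H.direction
  have e3 : Module.finrank F H.direction
      ≤ Module.finrank F (LinearMap.ker ((r.linear : V →ₗ[F] V) - 1)) :=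
    Submodule.finrank_mono hdir
  omega

lemma lower_bound [FiniteDimensional F V] (l : List (P ≃ᵃ[F] P))
    (hl : ∀ r ∈ l, IsAffRefl r) :
    Module.finrank F (LinearMap.range (((l.prod).linear : V →ₗ[F] V) - 1)) ≤ l.length := by
  induction l with
  | nil =>
    have h : (((List.prod ([] : List (P ≃ᵃ[F] P))).linear : V →ₗ[F] V) - 1) = 0 := by
      ext x
      show (1 : P ≃ᵃ[F] P).linear x - x = 0
      show x - x = 0
      simp
    rw [h]
    simp
  | cons r l ih =>
    have key : ∀ x : V, ((((r :: l).prod).linear : V →ₗ[F] V) - 1) x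
        = ((r.linear : V →ₗ[F] V) - 1) (l.prod.linear x)
          + (((l.prod).linear : V →ₗ[F] V) - 1) x := by
      intro x
      show r.linear (l.prod.linear x) - x
        = (r.linear (l.prod.linear x) - l.prod.linear x) + (l.prod.linear x - x)
      abel
    have hsub : LinearMap.range ((((r :: l).prod).linear : V →ₗ[F] V) - 1)
        ≤ LinearMap.range ((r.linear : V →ₗ[F] V) - 1)
          ⊔ LinearMap.range (((l.prod).linear : V →ₗ[F] V) - 1) := by
      rintro _ ⟨x, rfl⟩
      rw [key]
      exact Submodule.add_mem_sup (LinearMap.mem_range_self _ _) (LinearMap.mem_range_self _ _)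
    have h1 : Module.finrank F (LinearMap.range ((r.linear : V →ₗ[F] V) - 1)) ≤ 1 :=
      rank_le_one_of_isAffRefl (hl r List.mem_cons_self)
    have h2 := ih (fun s hs => hl s (List.mem_cons_of_mem r hs))
    have h3 := Submodule.finrank_mono hsub
    have h4 := Submodule.finrank_sup_add_finrank_inf_eq
      (LinearMap.range ((r.linear : V →ₗ[F] V) - 1))
      (LinearMap.range (((l.prod).linear : V →ₗ[F] V) - 1))
    simp only [List.length_cons]
    omega

end Affine

theorem stmt14 {F V P : Type*} [Field F] [AddCommGroup V] [Module F V]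
    [FiniteDimensional F V] [AddTorsor V P]
    (g : P ≃ᵃ[F] P) (a : P) (ha : g a = a) :
    reflLenA g = (movDim g : ℕ∞) := by
  have hmov : movDim g = Module.finrank F (LinearMap.range ((g.linear : V →ₗ[F] V) - 1)) := by
    unfold movDim
    rw [mov_eq_range g a ha, vectorSpan_coe_submodule]
  apply le_antisymm
  · obtain ⟨l, hrefl, hprod, hlen⟩ := linear_upper (movDim g) g.linear (le_of_eq hmov.symm)
    have hmem : ((l.map (conjAff a)).length : ℕ∞) ∈ {n : ℕ∞ | ∃ l' : List (P ≃ᵃ[F] P),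
        (∀ r ∈ l', IsAffRefl r) ∧ l'.prod = g ∧ (l'.length : ℕ∞) = n} := by
      refine ⟨l.map (conjAff a), ?_, ?_, rfl⟩
      · intro r hr
        obtain ⟨s, hs, rfl⟩ := List.mem_map.mp hr
        exact isAffRefl_conjAff a s (hrefl s hs)
      · rw [← map_list_prod (conjAff a) l, hprod, conjAff_linear_eq a g ha]
    calc reflLenA g ≤ ((l.map (conjAff a)).length : ℕ∞) := sInf_le hmem
      _ ≤ (movDim g : ℕ∞) := by
        rw [List.length_map]
        exact_mod_cast hlen
  · apply le_sInf
    rintro n ⟨l, hrefl, hprod, hlen⟩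
    rw [← hlen, Nat.cast_le, hmov, ← hprod]
    exact lower_bound l hrefl
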